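/- Inverse transformation identity for Burkholder functionals: define B_p(A) = ((p/2)det A + (1−p/2)|A|²)|A|^{p−2} for p ≥ 1 and B_p(A) = ((p/2)|A|² + (1−p/2)det A)·|A|^{−p}·(det A)^{p−1} for p ≤ 1, on matrices A with det A > 0. Then for the inverse transform Ê(A) := E(A^{−1})·det A one has B̂_p = B_q whenever p + q = 2; i.e. B_p(A^{−1})·det A = B_{2−p}(A) for all invertible 2×2 matrices A with det A > 0. -/

import Mathlib

/-- The operator norm of a 2×2 real matrix, acting on Euclidean space. -/
noncomputable def opNorm (A : Matrix (Fin 2) (Fin 2) ℝ) : ℝ :=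
  ‖LinearMap.toContinuousLinearMap (Matrix.toEuclideanLin A)‖

/-- The extended Burkholder functional: for `p ≥ 1`,
`B_p(A) = ((p/2)det A + (1−p/2)|A|²)|A|^{p−2}`, and for `p ≤ 1` (on `det A > 0`),
`B_p(A) = ((p/2)|A|² + (1−p/2)det A)·|A|^{−p}·(det A)^{p−1}`. -/
noncomputable def burkholderExt (p : ℝ) (A : Matrix (Fin 2) (Fin 2) ℝ) : ℝ :=
  if 1 ≤ p then
    ((p / 2) * A.det + (1 - p / 2) * opNorm A ^ 2) * opNorm A ^ (p - 2)
  else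
    ((p / 2) * opNorm A ^ 2 + (1 - p / 2) * A.det) * opNorm A ^ (-p) * A.det ^ (p - 1)


open scoped Matrix.Norms.L2Operator
open scoped Matrix

namespace BurkAux

noncomputable def J : Matrix (Fin 2) (Fin 2) ℝ := !![0, 1; -1, 0]

lemma J_mul_Jt : J * Jᴴ = 1 := by
  ext i j
  fin_cases i <;> fin_cases j <;>
    simp [J, Matrix.mul_apply, Fin.sum_univ_two, Matrix.conjTranspose_apply, Matrix.one_apply, Matrix.vecHead, Matrix.vecTail, Matrix.vecMul, dotProduct]

lemma Jt_mul_J : Jᴴ * J = 1 := by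
  ext i j
  fin_cases i <;> fin_cases j <;>
    simp [J, Matrix.mul_apply, Fin.sum_univ_two, Matrix.conjTranspose_apply, Matrix.one_apply, Matrix.vecHead, Matrix.vecTail, Matrix.vecMul, dotProduct]

lemma norm_one' : ‖(1 : Matrix (Fin 2) (Fin 2) ℝ)‖ = 1 := by
  rw [Matrix.cstar_norm_def, map_one]; exact norm_one

lemma norm_J : ‖J‖ = 1 := by
  have h := Matrix.l2_opNorm_conjTranspose_mul_self J
  rw [Jt_mul_J, norm_one'] at h
  nlinarith [norm_nonneg J]

lemma norm_Jt : ‖Jᴴ‖ = 1 := by rw [Matrix.l2_opNorm_conjTranspose, norm_J]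

lemma norm_J_mul (M : Matrix (Fin 2) (Fin 2) ℝ) : ‖J * M‖ = ‖M‖ := by
  have h1 : ‖J * M‖ ≤ ‖M‖ := by
    have := Matrix.l2_opNorm_mul J M; rwa [norm_J, one_mul] at this
  have h2 : ‖M‖ ≤ ‖J * M‖ := by
    have := Matrix.l2_opNorm_mul Jᴴ (J * M)
    rwa [← Matrix.mul_assoc, Jt_mul_J, Matrix.one_mul, norm_Jt, one_mul] at this
  linarith

lemma norm_mul_Jt (M : Matrix (Fin 2) (Fin 2) ℝ) : ‖M * Jᴴ‖ = ‖M‖ := by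
  have h1 : ‖M * Jᴴ‖ ≤ ‖M‖ := by
    have := Matrix.l2_opNorm_mul M Jᴴ; rwa [norm_Jt, mul_one] at this
  have h2 : ‖M‖ ≤ ‖M * Jᴴ‖ := by
    have := Matrix.l2_opNorm_mul (M * Jᴴ) J
    rwa [Matrix.mul_assoc, Jt_mul_J, Matrix.mul_one, norm_J, mul_one] at this
  linarith

lemma adjugate_eq (A : Matrix (Fin 2) (Fin 2) ℝ) : A.adjugate = J * Aᵀ * Jᴴ := by
  ext i j
  fin_cases i <;> fin_cases j <;>
    simp [J, Matrix.adjugate_fin_two, Matrix.mul_apply, Fin.sum_univ_two,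
      Matrix.conjTranspose_apply, Matrix.transpose_apply, Matrix.vecHead, Matrix.vecTail, Matrix.vecMul, dotProduct]

lemma norm_adjugate (A : Matrix (Fin 2) (Fin 2) ℝ) : ‖A.adjugate‖ = ‖A‖ := by
  rw [adjugate_eq, norm_mul_Jt, norm_J_mul, ← Matrix.conjTranspose_eq_transpose_of_trivial,
    Matrix.l2_opNorm_conjTranspose]

lemma norm_inv (A : Matrix (Fin 2) (Fin 2) ℝ) (hA : 0 < A.det) : ‖A⁻¹‖ = ‖A‖ / A.det := by
  rw [Matrix.inv_def, Ring.inverse_eq_inv', norm_smul, norm_adjugate, Real.norm_eq_abs,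
    abs_inv, abs_of_pos hA, div_eq_inv_mul]

end BurkAux


/-- **Inverse transformation identity** for the Burkholder functionals: with
`Ê(A) := E(A⁻¹)·det A`, one has `B̂_p = B_{2−p}` on matrices with positive
determinant, i.e. `B_p(A⁻¹)·det A = B_{2−p}(A)`. -/
theorem burkholder_inverse_transform (p : ℝ) (A : Matrix (Fin 2) (Fin 2) ℝ)
    (hA : 0 < A.det) :
    burkholderExt p A⁻¹ * A.det = burkholderExt (2 - p) A := by
  have hopAi : opNorm A⁻¹ = opNorm A / A.det := by
    exact BurkAux.norm_inv A hA
  have hdet : A⁻¹.det = A.det⁻¹ := by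
    rw [Matrix.det_nonsing_inv, Ring.inverse_eq_inv']
  have hN : 0 < opNorm A := by
    show 0 < ‖A‖
    refine norm_pos_iff.mpr fun h => ?_
    rw [h, Matrix.det_zero] at hA
    exact lt_irrefl 0 hA
  unfold burkholderExt
  rw [hopAi, hdet]
  set N := opNorm A with hNdef
  set d := A.det with hddef
  have hd : 0 < d := hA
  have ha : 0 < N ^ p := Real.rpow_pos_of_pos hN p
  have hb : 0 < d ^ p := Real.rpow_pos_of_pos hd p
  have h2 : N ^ ((2:ℝ)) = N ^ (2:ℕ) := by
    rw [show ((2:ℝ)) = ((2:ℕ):ℝ) by norm_num, Real.rpow_natCast]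
  rcases lt_trichotomy p 1 with hp | hp | hp
  · rw [if_neg (by linarith), if_pos (by linarith)]
    rw [Real.div_rpow (le_of_lt hN) (le_of_lt hd),
      Real.inv_rpow (le_of_lt hd),
      show (2:ℝ) - p - 2 = -p by ring,
      Real.rpow_neg (le_of_lt hN), Real.rpow_neg (le_of_lt hd),
      Real.rpow_sub hd, Real.rpow_one, div_pow]
    field_simp
    ring
  · subst hp
    norm_num
    rw [Real.div_rpow (le_of_lt hN) (le_of_lt hd),
      Real.rpow_neg_one, Real.rpow_neg_one, div_pow]
    field_simp
  · rw [if_pos (by linarith), if_neg (by linarith)]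
    rw [Real.div_rpow (le_of_lt hN) (le_of_lt hd),
      Real.rpow_sub hN, Real.rpow_sub hd,
      show (2:ℝ) - p - 1 = 1 - p by ring,
      Real.rpow_sub hd, Real.rpow_one,
      show -(2 - p) = p - 2 by ring,
      Real.rpow_sub hN,
      h2, div_pow]
    field_simp
    simp only [Real.rpow_ofNat]
    ring
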